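/- arXiv:0907.0403 — 6 statements merged into one kernel-verified Lean document; each statement's English description precedes it below -/
import Mathlib

section
/- Monotonicity of positive formulas: For any positive epistemic formula φ (built from atoms, ∧, ∨, and common-knowledge operators C_G, with no negation) and any two H-compliant states (V,M) ⊆ (V',M') (componentwise inclusion), if (V,M) ⊨_H φ then (V',M') ⊨_H φ. -/
structure Msg (P A : Type) where
  sender : P
  grp : Set P
  fact : A

inductive Form (P A : Type) where
  | atom : A → Form P A
  | neg  : Form P A → Form P A
  | and  : Form P A → Form P A → Form P A
  | or   : Form P A → Form P A → Form P A
  | ck   : Set P → Form P A → Form P A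

/-- The negation-free (positive) fragment L⁺. -/
def Positive {P A : Type} : Form P A → Prop
  | .atom _ => True
  | .neg _ => False
  | .and φ ψ => Positive φ ∧ Positive ψ
  | .or φ ψ => Positive φ ∧ Positive ψ
  | .ck _ φ => Positive φ

/-- Atoms occurring in a formula. -/
def FactsF {P A : Type} : Form P A → Set A
  | .atom p => {p}
  | .neg φ => FactsF φ
  | .and φ ψ => FactsF φ ∪ FactsF ψ
  | .or φ ψ => FactsF φ ∪ FactsF ψ
  | .ck _ φ => FactsF φ

/-- Facts occurring in a set of messages. -/
def Facts {P A : Type} (M : Set (Msg P A)) : Set A := {p | ∃ m ∈ M, m.fact = p}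

/-- A state in the telling setting: messages (i,A,p) with i ∈ A, p ∈ At_i
    (ownership given by `owner`), and Facts(M) ⊆ V. -/
def TState {P A : Type} (owner : A → P) (V : Set A) (M : Set (Msg P A)) : Prop :=
  ∀ m ∈ M, m.sender ∈ m.grp ∧ owner m.fact = m.sender ∧ m.fact ∈ V

/-- All messages are H-compliant. -/
def HComp {P A : Type} (H : Set (Set P)) (M : Set (Msg P A)) : Prop :=
  ∀ m ∈ M, m.grp ∈ H

/-- Indistinguishability for player i: equality of (V_i, M_i). -/
def indist {P A : Type} (owner : A → P) (i : P)
    (s t : Set A × Set (Msg P A)) : Prop :=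
  {p ∈ s.1 | owner p = i} = {p ∈ t.1 | owner p = i} ∧
  {m ∈ s.2 | i ∈ m.grp} = {m ∈ t.2 | i ∈ m.grp}

/-- ∼_G: transitive closure of the union of the ∼_i, i ∈ G. -/
def reach {P A : Type} (owner : A → P) (G : Set P) :
    Set A × Set (Msg P A) → Set A × Set (Msg P A) → Prop :=
  Relation.TransGen (fun s t => ∃ i ∈ G, indist owner i s t)

/-- Semantics ⊨_H (telling setting): C_G quantifies over H-compliant telling states. -/
def sat {P A : Type} (owner : A → P) (H : Set (Set P)) :
    Form P A → Set A → Set (Msg P A) → Prop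
  | .atom p, V, _ => p ∈ V
  | .neg φ, V, M => ¬ sat owner H φ V M
  | .and φ ψ, V, M => sat owner H φ V M ∧ sat owner H ψ V M
  | .or φ ψ, V, M => sat owner H φ V M ∨ sat owner H ψ V M
  | .ck G φ, V, M => ∀ V' M', TState owner V' M' → HComp H M' →
      reach owner G (V, M) (V', M') → sat owner H φ V' M'

/-- The complete hypergraph: all nonempty subsets of players. -/
def completeH (P : Type) : Set (Set P) := {B | B.Nonempty}

/-- Iterated knowledge K_{i₁}…K_{i_k} φ along a word. -/
def Kw {P A : Type} (w : List P) (φ : Form P A) : Form P A :=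
  w.foldr (fun i ψ => Form.ck {i} ψ) φ

/-- Invariant: t is a compliant state included in s up to facts of its own messages. -/
def StInv {P A : Type} (owner : A → P) (H : Set (Set P))
    (t s : Set A × Set (Msg P A)) : Prop :=
  t.2 ⊆ s.2 ∧ t.1 ⊆ s.1 ∪ Facts t.2 ∧ TState owner t.1 t.2 ∧ HComp H t.2

lemma step_lemma {P A : Type} (owner : A → P) (H : Set (Set P)) (i : P)
    {s s' t : Set A × Set (Msg P A)}
    (hst : indist owner i s s') (hinv : StInv owner H t s) :
    ∃ t', StInv owner H t' s' ∧ indist owner i t t' := by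
  obtain ⟨ht2, ht1, htS, htC⟩ := hinv
  obtain ⟨hs1, hs2⟩ := hst
  set N : Set (Msg P A) := {m ∈ t.2 | i ∈ m.grp} with hN
  set W : Set A := {p ∈ t.1 | owner p = i} ∪ Facts N with hW
  refine ⟨(W, N), ⟨?_, ?_, ?_, ?_⟩, ?_, ?_⟩
  · -- N ⊆ s'.2
    intro m hm
    have : m ∈ {m ∈ s.2 | i ∈ m.grp} := ⟨ht2 hm.1, hm.2⟩
    rw [hs2] at this
    exact this.1
  · -- W ⊆ s'.1 ∪ Facts N
    intro p hp
    rcases hp with ⟨hpt, hpi⟩ | hpF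
    · rcases ht1 hpt with hps | hpF
      · have : p ∈ {p ∈ s.1 | owner p = i} := ⟨hps, hpi⟩
        rw [hs1] at this
        exact Or.inl this.1
      · obtain ⟨m, hm, rfl⟩ := hpF
        have hsend := (htS m hm).2.1
        have : m ∈ N := ⟨hm, by rw [← hpi, hsend]; exact (htS m hm).1⟩
        exact Or.inr ⟨m, this, rfl⟩
    · exact Or.inr hpF
  · -- TState
    intro m hm
    exact ⟨(htS m hm.1).1, (htS m hm.1).2.1, Or.inr ⟨m, hm, rfl⟩⟩
  · -- HComp
    intro m hm
    exact htC m hm.1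
  · -- indist first component
    ext p
    constructor
    · rintro ⟨hpt, hpi⟩
      exact ⟨Or.inl ⟨hpt, hpi⟩, hpi⟩
    · rintro ⟨hpW, hpi⟩
      refine ⟨?_, hpi⟩
      rcases hpW with ⟨hpt, _⟩ | ⟨m, hm, rfl⟩
      · exact hpt
      · exact (htS m hm.1).2.2
  · -- indist second component
    ext m
    constructor
    · rintro ⟨hmt, hmg⟩
      exact ⟨⟨hmt, hmg⟩, hmg⟩
    · rintro ⟨hmN, hmg⟩
      exact ⟨hmN.1, hmg⟩

lemma chain_lemma {P A : Type} (owner : A → P) (H : Set (Set P)) (G : Set P)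
    {s s'' t : Set A × Set (Msg P A)}
    (hr : reach owner G s s'') (hinv : StInv owner H t s) :
    ∃ t'', StInv owner H t'' s'' ∧ reach owner G t t'' := by
  induction hr with
  | single hstep =>
      obtain ⟨i, hiG, hind⟩ := hstep
      obtain ⟨t', h1, h2⟩ := step_lemma owner H i hind hinv
      exact ⟨t', h1, Relation.TransGen.single ⟨i, hiG, h2⟩⟩
  | tail _ hstep ih =>
      obtain ⟨t', hinv', hr'⟩ := ih
      obtain ⟨i, hiG, hind⟩ := hstep
      obtain ⟨t'', h1, h2⟩ := step_lemma owner H i hind hinv'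
      exact ⟨t'', h1, hr'.tail ⟨i, hiG, h2⟩⟩

lemma positive_monotone_aux {P A : Type} (owner : A → P) (H : Set (Set P))
    (φ : Form P A) (hφ : Positive φ) :
    ∀ (V V' : Set A) (M M' : Set (Msg P A)),
      TState owner V M → TState owner V' M' → HComp H M → HComp H M' →
      V ⊆ V' → M ⊆ M' → sat owner H φ V M → sat owner H φ V' M' := by
  induction φ with
  | atom p =>
      intro V V' M M' _ _ _ _ hV _ h
      exact hV h
  | neg ψ _ => exact absurd hφ (by simp [Positive])
  | and φ ψ ihφ ihψ =>
      intro V V' M M' hS hS' hC hC' hV hM h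
      exact ⟨ihφ hφ.1 V V' M M' hS hS' hC hC' hV hM h.1,
             ihψ hφ.2 V V' M M' hS hS' hC hC' hV hM h.2⟩
  | or φ ψ ihφ ihψ =>
      intro V V' M M' hS hS' hC hC' hV hM h
      rcases h with h | h
      · exact Or.inl (ihφ hφ.1 V V' M M' hS hS' hC hC' hV hM h)
      · exact Or.inr (ihψ hφ.2 V V' M M' hS hS' hC hC' hV hM h)
  | ck G ψ ih =>
      intro V V' M M' hS hS' hC hC' hV hM h
      intro V'' M'' hS'' hC'' hr
      have hinv0 : StInv owner H (V, M) (V', M') :=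
        ⟨hM, fun p hp => Or.inl (hV hp), hS, hC⟩
      obtain ⟨t, ⟨ht2, ht1, htS, htC⟩, htr⟩ := chain_lemma owner H G hr hinv0
      have hsatt : sat owner H ψ t.1 t.2 := h t.1 t.2 htS htC htr
      have htV : t.1 ⊆ V'' := by
        intro p hp
        rcases ht1 hp with h1 | ⟨m, hm, rfl⟩
        · exact h1
        · exact (hS'' m (ht2 hm)).2.2
      exact ih hφ t.1 V'' t.2 M'' htS hS'' htC hC'' htV ht2 hsatt

theorem positive_monotone {P A : Type} [Fintype P] (owner : A → P) (H : Set (Set P))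
    (V V' : Set A) (M M' : Set (Msg P A))
    (hS : TState owner V M) (hS' : TState owner V' M')
    (hC : HComp H M) (hC' : HComp H M')
    (hV : V ⊆ V') (hM : M ⊆ M')
    (φ : Form P A) (hφ : Positive φ)
    (h : sat owner H φ V M) : sat owner H φ V' M' :=
  positive_monotone_aux owner H φ hφ V V' M M' hS hS' hC hC' hV hM h
end

section
/- Irrelevance of common knowledge of the hypergraph for positive formulas (telling setting): For any H-compliant state (V,M) and any positive formula φ ∈ L⁺, (V,M) ⊨ φ iff (V,M) ⊨_H φ, where ⊨ denotes ⊨_H with H the complete hypergraph (all nonempty subsets of N). -/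
lemma restrict_indist {P A : Type} (owner : A → P) (H : Set (Set P)) (i : P)
    {s t : Set A × Set (Msg P A)} (h : indist owner i s t) :
    indist owner i (s.1, {m ∈ s.2 | m.grp ∈ H}) (t.1, {m ∈ t.2 | m.grp ∈ H}) := by
  obtain ⟨h1, h2⟩ := h
  refine ⟨h1, ?_⟩
  ext m
  have := Set.ext_iff.mp h2 m
  simp only [Set.mem_setOf_eq] at this ⊢
  tauto

lemma reach_restrict {P A : Type} (owner : A → P) (H : Set (Set P)) (G : Set P)
    {s t : Set A × Set (Msg P A)} (h : reach owner G s t) :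
    reach owner G (s.1, {m ∈ s.2 | m.grp ∈ H}) (t.1, {m ∈ t.2 | m.grp ∈ H}) := by
  induction h with
  | single h' =>
      obtain ⟨i, hi, hin⟩ := h'
      exact .single ⟨i, hi, restrict_indist owner H i hin⟩
  | tail _ h' ih =>
      obtain ⟨i, hi, hin⟩ := h'
      exact .tail ih ⟨i, hi, restrict_indist owner H i hin⟩

lemma lemA {P A : Type} (owner : A → P) (H : Set (Set P)) :
    ∀ φ : Form P A, Positive φ → ∀ V M,
      sat owner H φ V {m ∈ M | m.grp ∈ H} → sat owner (completeH P) φ V M := by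
  intro φ
  induction φ with
  | atom p => intro _ V M h; exact h
  | neg φ ih => intro h; simp [Positive] at h
  | and φ ψ ih1 ih2 =>
      intro hp V M hs
      exact ⟨ih1 hp.1 V M hs.1, ih2 hp.2 V M hs.2⟩
  | or φ ψ ih1 ih2 =>
      intro hp V M hs
      exact hs.imp (ih1 hp.1 V M) (ih2 hp.2 V M)
  | ck G φ ih =>
      intro hp V M hs V' M' hT hC' hr
      exact ih hp V' M' (hs V' _ (fun m hm => hT m hm.1) (fun m hm => hm.2)
        (reach_restrict owner H G hr))

lemma lemB {P A : Type} (owner : A → P) (H : Set (Set P)) :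
    ∀ φ : Form P A, Positive φ → ∀ V M, HComp H M →
      sat owner (completeH P) φ V M → sat owner H φ V M := by
  intro φ
  induction φ with
  | atom p => intro _ V M _ h; exact h
  | neg φ ih => intro h; simp [Positive] at h
  | and φ ψ ih1 ih2 =>
      intro hp V M hM hs
      exact ⟨ih1 hp.1 V M hM hs.1, ih2 hp.2 V M hM hs.2⟩
  | or φ ψ ih1 ih2 =>
      intro hp V M hM hs
      exact hs.imp (ih1 hp.1 V M hM) (ih2 hp.2 V M hM)
  | ck G φ ih =>
      intro hp V M hM hs V' M' hT hC' hr
      exact ih hp V' M' hC'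
        (hs V' M' hT (fun m hm => ⟨m.sender, (hT m hm).1⟩) hr)

theorem ck_of_H_irrelevant_positive {P A : Type} [Fintype P] (owner : A → P)
    (H : Set (Set P)) (V : Set A) (M : Set (Msg P A))
    (hS : TState owner V M) (hC : HComp H M)
    (φ : Form P A) (hφ : Positive φ) :
    sat owner (completeH P) φ V M ↔ sat owner H φ V M := by
  constructor
  · exact lemB owner H φ hφ V M hC
  · intro h
    have hMH : {m ∈ M | m.grp ∈ H} = M :=
      Set.ext fun m => ⟨fun hm => hm.1, fun hm => ⟨hm, hC m hm⟩⟩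
    exact lemA owner H φ hφ V M (by rw [hMH]; exact h)
end

section
/- Distributivity of individual knowledge over disjunction of positive formulas: For any φ₁, φ₂ ∈ L⁺, any player i, and any state (V,M) (with the complete hypergraph, i.e., ⊨), (V,M) ⊨ K_i(φ₁ ∨ φ₂) iff (V,M) ⊨ K_i φ₁ ∨ K_i φ₂. -/
section Aux

variable {P A : Type}

lemma tstate_hcomp (owner : A → P) {V : Set A} {M : Set (Msg P A)}
    (h : TState owner V M) : HComp (completeH P) M :=
  fun m hm => ⟨m.sender, (h m hm).1⟩

lemma indist_trans {owner : A → P} {i : P} {s t u : Set A × Set (Msg P A)}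
    (h1 : indist owner i s t) (h2 : indist owner i t u) : indist owner i s u :=
  ⟨h1.1.trans h2.1, h1.2.trans h2.2⟩

lemma reach_singleton {owner : A → P} {i : P} {s t : Set A × Set (Msg P A)}
    (h : reach owner {i} s t) : indist owner i s t := by
  induction h with
  | single h => obtain ⟨j, hj, hind⟩ := h; cases hj; exact hind
  | tail _ h ih => obtain ⟨j, hj, hind⟩ := h; cases hj; exact indist_trans ih hind

/-- One-step shadow construction. -/
lemma step_shadow (owner : A → P) (j : P) {W : Set A} {N : Set (Msg P A)}
    (hWN : TState owner W N) {s s' : Set A × Set (Msg P A)}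
    (hind : indist owner j s s') (hN : N ⊆ s.2) (hW : W ⊆ s.1 ∪ Facts N) :
    ∃ W' N', TState owner W' N' ∧ indist owner j (W, N) (W', N') ∧
      N' ⊆ s'.2 ∧ W' ⊆ s'.1 ∪ Facts N' := by
  refine ⟨{p ∈ W | owner p = j} ∪ Facts {m ∈ N | j ∈ m.grp}, {m ∈ N | j ∈ m.grp},
      ?_, ⟨?_, ?_⟩, ?_, ?_⟩
  · intro m hm
    obtain ⟨hmN, hmg⟩ := hm
    exact ⟨(hWN m hmN).1, (hWN m hmN).2.1, Or.inr ⟨m, ⟨hmN, hmg⟩, rfl⟩⟩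
  · -- atoms owned by j agree
    ext p
    simp only [Set.mem_setOf_eq, Set.mem_union]
    constructor
    · rintro ⟨hp, ho⟩; exact ⟨Or.inl ⟨hp, ho⟩, ho⟩
    · rintro ⟨hp | hp, ho⟩
      · exact ⟨hp.1, ho⟩
      · obtain ⟨m, ⟨hmN, _⟩, rfl⟩ := hp
        exact ⟨(hWN m hmN).2.2, ho⟩
  · -- messages with j agree
    ext m
    simp only [Set.mem_setOf_eq]
    tauto
  · -- N' ⊆ s'.2
    rintro m ⟨hmN, hmg⟩
    have : m ∈ {m ∈ s.2 | j ∈ m.grp} := ⟨hN hmN, hmg⟩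
    rw [hind.2] at this
    exact this.1
  · -- W' ⊆ s'.1 ∪ Facts N'
    rintro p (⟨hpW, ho⟩ | hp)
    · rcases hW hpW with hps | ⟨m, hmN, rfl⟩
      · have : p ∈ {p ∈ s.1 | owner p = j} := ⟨hps, ho⟩
        rw [hind.1] at this
        exact Or.inl this.1
      · have hmg : j ∈ m.grp := by
          have := hWN m hmN
          rw [← this.2.1, ho] at this
          exact this.1
        exact Or.inr ⟨m, ⟨hmN, hmg⟩, rfl⟩
    · exact Or.inr hp

/-- Shadow a reachability chain starting below it. -/
lemma shadow (owner : A → P) (G : Set P) {V : Set A} {M : Set (Msg P A)}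
    (hVM : TState owner V M) :
    ∀ s s', reach owner G s s' → M ⊆ s.2 → V ⊆ s.1 ∪ Facts M →
    ∃ W N, TState owner W N ∧ reach owner G (V, M) (W, N) ∧
      N ⊆ s'.2 ∧ W ⊆ s'.1 ∪ Facts N := by
  intro s s' hr
  induction hr with
  | single h =>
    intro hM hV
    obtain ⟨j, hj, hind⟩ := h
    obtain ⟨W', N', h1, h2, h3, h4⟩ := step_shadow owner j hVM hind hM hV
    exact ⟨W', N', h1, Relation.TransGen.single ⟨j, hj, h2⟩, h3, h4⟩
  | tail _ h ih =>
    intro hM hV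
    obtain ⟨W, N, hWN, hreach, hN, hW⟩ := ih hM hV
    obtain ⟨j, hj, hind⟩ := h
    obtain ⟨W', N', h1, h2, h3, h4⟩ := step_shadow owner j hWN hind hN hW
    exact ⟨W', N', h1, hreach.tail ⟨j, hj, h2⟩, h3, h4⟩

lemma facts_subset {owner : A → P} {V : Set A} {M N : Set (Msg P A)}
    (hT : TState owner V M) (h : N ⊆ M) : Facts N ⊆ V := by
  rintro p ⟨m, hm, rfl⟩; exact (hT m (h hm)).2.2

/-- Monotonicity of positive formulas. -/
lemma mono (owner : A → P) :
    ∀ φ : Form P A, Positive φ → ∀ V M V' M', TState owner V M → TState owner V' M' →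
      V ⊆ V' → M ⊆ M' → sat owner (completeH P) φ V M → sat owner (completeH P) φ V' M' := by
  intro φ
  induction φ with
  | atom p => intro _ V M V' M' _ _ hV _ h; exact hV h
  | neg φ ih => intro h; exact absurd h not_false
  | and φ ψ ih1 ih2 =>
    rintro ⟨p1, p2⟩ V M V' M' hT hT' hV hM ⟨hφ, hψ⟩
    exact ⟨ih1 p1 V M V' M' hT hT' hV hM hφ, ih2 p2 V M V' M' hT hT' hV hM hψ⟩
  | or φ ψ ih1 ih2 =>
    rintro ⟨p1, p2⟩ V M V' M' hT hT' hV hM h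
    rcases h with h | h
    · exact Or.inl (ih1 p1 V M V' M' hT hT' hV hM h)
    · exact Or.inr (ih2 p2 V M V' M' hT hT' hV hM h)
  | ck G φ ih =>
    intro hp V M V' M' hT hT' hV hM h
    intro V'' M'' hT'' hH'' hreach
    obtain ⟨W, N, hWN, hr, hNsub, hWsub⟩ :=
      shadow owner G hT (V', M') (V'', M'') hreach hM (fun p hp => Or.inl (hV hp))
    have hφWN : sat owner (completeH P) φ W N :=
      h W N hWN (tstate_hcomp owner hWN) hr
    have hWsub' : W ⊆ V'' := by
      intro p hp
      rcases hWsub hp with h | h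
      · exact h
      · exact facts_subset hT'' hNsub h
    exact ih hp W N V'' M'' hWN hT'' hWsub' hNsub hφWN

end Aux

theorem k_distributes_over_disjunction {P A : Type} [Fintype P] (owner : A → P)
    (V : Set A) (M : Set (Msg P A)) (hS : TState owner V M)
    (i : P) (φ₁ φ₂ : Form P A) (h₁ : Positive φ₁) (h₂ : Positive φ₂) :
    sat owner (completeH P) (.ck {i} (.or φ₁ φ₂)) V M ↔
      sat owner (completeH P) (.ck {i} φ₁) V M ∨
      sat owner (completeH P) (.ck {i} φ₂) V M := by
  constructor
  · intro hK
    -- minimal i-state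
    have hind0 : indist owner i (V, M) ({p ∈ V | owner p = i}, {m ∈ M | i ∈ m.grp}) := by
      constructor
      · ext p; simp only [Set.mem_setOf_eq]; tauto
      · ext m; simp only [Set.mem_setOf_eq]; tauto
    obtain ⟨W, N, hWN, hind, hNsub, hWsub⟩ :=
      step_shadow owner i hS hind0 (le_refl M) (fun p hp => Or.inl hp)
    have hreach0 : reach owner {i} (V, M) (W, N) :=
      Relation.TransGen.single ⟨i, rfl, hind⟩
    have hor : sat owner (completeH P) (.or φ₁ φ₂) W N :=
      hK W N hWN (tstate_hcomp owner hWN) hreach0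
    -- given φ positive true at (W,N), derive K_i φ
    have key : ∀ φ : Form P A, Positive φ → sat owner (completeH P) φ W N →
        sat owner (completeH P) (.ck {i} φ) V M := by
      intro φ hp hφ V' M' hT' hH' hr
      have hind' : indist owner i (V, M) (V', M') := reach_singleton hr
      have hNsub' : N ⊆ M' := by
        intro m hm
        have h1 : m ∈ {m ∈ M | i ∈ m.grp} := hNsub hm
        have h2 : m ∈ {m ∈ M' | i ∈ m.grp} := by
          have := hind'.2
          rw [← this]
          exact ⟨h1.1, h1.2⟩
        exact h2.1
      have hWsub' : W ⊆ V' := by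
        intro p hp'
        rcases hWsub hp' with h | h
        · have h2 : p ∈ {p ∈ V' | owner p = i} := by
            rw [← hind'.1]; exact ⟨h.1, h.2⟩
          exact h2.1
        · exact facts_subset hT' hNsub' h
      exact mono owner φ hp W N V' M' hWN hT' hWsub' hNsub' hφ
    rcases hor with h | h
    · exact Or.inl (key φ₁ h₁ h)
    · exact Or.inr (key φ₂ h₂ h)
  · rintro (h | h) V' M' hT' hH' hr
    · exact Or.inl (h V' M' hT' hH' hr)
    · exact Or.inr (h V' M' hT' hH' hr)
end

section
/- Mutual knowledge along one exhaustive word suffices for common knowledge of positive formulas: For any nonempty G ⊆ N, any φ ∈ L⁺, and any state (V,M), (V,M) ⊨ C_G φ iff there exists a word w over G with set of letters exactly G such that (V,M) ⊨ K_w φ. -/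
/-! ### Auxiliary development -/

/-- Messages of `M` whose group contains all of `G`. -/
def starM {P A : Type} (G : Set P) (M : Set (Msg P A)) : Set (Msg P A) :=
  {m ∈ M | G ⊆ m.grp}

/-- Facts of `V` owned simultaneously by every member of `G`. -/
def resV {P A : Type} (owner : A → P) (G : Set P) (V : Set A) : Set A :=
  {p ∈ V | ∀ i ∈ G, owner p = i}

/-- The valuation of the minimal `G`-reachable state. -/
def starV {P A : Type} (owner : A → P) (G : Set P) (V : Set A)
    (M : Set (Msg P A)) : Set A :=
  Facts (starM G M) ∪ resV owner G V

section AuxLemmas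
variable {P A : Type}

theorem aux_starM_subset (G : Set P) (M : Set (Msg P A)) : starM G M ⊆ M :=
  fun _ hm => hm.1

theorem aux_facts_mono {M M' : Set (Msg P A)} (h : M ⊆ M') : Facts M ⊆ Facts M' := by
  rintro p ⟨m, hm, rfl⟩; exact ⟨m, h hm, rfl⟩

theorem aux_facts_sub {owner : A → P} {V : Set A} {M : Set (Msg P A)}
    (h : TState owner V M) : Facts M ⊆ V := by
  rintro p ⟨m, hm, rfl⟩; exact (h m hm).2.2

theorem aux_hcomp {owner : A → P} {V : Set A} {M : Set (Msg P A)}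
    (h : TState owner V M) : HComp (completeH P) M :=
  fun m hm => ⟨m.sender, (h m hm).1⟩

theorem aux_tstate_star {owner : A → P} {V : Set A} {M : Set (Msg P A)}
    (h : TState owner V M) (G : Set P) :
    TState owner (starV owner G V M) (starM G M) := by
  intro m hm
  exact ⟨(h m hm.1).1, (h m hm.1).2.1, Or.inl ⟨m, hm, rfl⟩⟩

theorem aux_starM_mono {M M' : Set (Msg P A)} (h : M ⊆ M') (G : Set P) :
    starM G M ⊆ starM G M' := fun m hm => ⟨h hm.1, hm.2⟩

theorem aux_starV_mono {owner : A → P} {V V' : Set A} {M M' : Set (Msg P A)}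
    (hV : V ⊆ V') (hM : M ⊆ M') (G : Set P) :
    starV owner G V M ⊆ starV owner G V' M' := by
  rintro p (hF | ⟨hp, ho⟩)
  · exact Or.inl (aux_facts_mono (aux_starM_mono hM G) hF)
  · exact Or.inr ⟨hV hp, ho⟩

theorem aux_indist_star {owner : A → P} {V : Set A} {M : Set (Msg P A)}
    (h : TState owner V M) (i : P) :
    indist owner i (V, M) (starV owner {i} V M, starM {i} M) := by
  constructor
  · ext p
    simp only [Set.mem_setOf_eq, starV, resV, starM, Facts, Set.mem_union]
    constructor
    · rintro ⟨hp, ho⟩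
      exact ⟨Or.inr ⟨hp, fun j hj => by rw [hj]; exact ho⟩, ho⟩
    · rintro ⟨hp1, ho⟩
      refine ⟨?_, ho⟩
      rcases hp1 with ⟨m, hm, rfl⟩ | ⟨hp, _⟩
      · exact (h m hm.1).2.2
      · exact hp
  · ext m
    simp only [Set.mem_setOf_eq, starM, Set.singleton_subset_iff]
    tauto

theorem aux_starM_comp (S T : Set P) (M : Set (Msg P A)) :
    starM S (starM T M) = starM (S ∪ T) M := by
  ext m
  simp only [starM, Set.mem_setOf_eq, Set.union_subset_iff]
  tauto

theorem aux_starV_comp {owner : A → P} {V : Set A} {M : Set (Msg P A)}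
    (h : TState owner V M) (S T : Set P) :
    starV owner S (starV owner T V M) (starM T M) = starV owner (S ∪ T) V M := by
  ext p
  simp only [starV, resV, aux_starM_comp, Set.mem_union, Set.mem_setOf_eq]
  constructor
  · rintro (hF | ⟨hp, hS⟩)
    · exact Or.inl hF
    · rcases hp with ⟨m, ⟨hmM, hT⟩, rfl⟩ | ⟨hpV, hT⟩
      · left
        refine ⟨m, ⟨hmM, Set.union_subset ?_ hT⟩, rfl⟩
        intro i hi
        have hown := (h m hmM).2.1
        have : i = m.sender := by rw [← (hS i hi), hown]
        rw [this]; exact (h m hmM).1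
      · exact Or.inr ⟨hpV, fun i hi => hi.elim (hS i) (hT i)⟩
  · rintro (hF | ⟨hp, hST⟩)
    · exact Or.inl hF
    · exact Or.inr ⟨Or.inr ⟨hp, fun i hi => hST i (Or.inr hi)⟩,
        fun i hi => hST i (Or.inl hi)⟩

theorem aux_reach_lower {owner : A → P} {G : Set P}
    {s t : Set A × Set (Msg P A)} (h : reach owner G s t) :
    starM G s.2 ⊆ starM G t.2 ∧ resV owner G s.1 ⊆ resV owner G t.1 := by
  have step : ∀ {a b : Set A × Set (Msg P A)}, (∃ i ∈ G, indist owner i a b) →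
      starM G a.2 ⊆ starM G b.2 ∧ resV owner G a.1 ⊆ resV owner G b.1 := by
    rintro a b ⟨i, hiG, hV, hM⟩
    constructor
    · rintro m ⟨hm, hsub⟩
      have : m ∈ {m ∈ a.2 | i ∈ m.grp} := ⟨hm, hsub hiG⟩
      rw [hM] at this
      exact ⟨this.1, hsub⟩
    · rintro p ⟨hp, ho⟩
      have : p ∈ {p ∈ a.1 | owner p = i} := ⟨hp, ho i hiG⟩
      rw [hV] at this
      exact ⟨this.1, ho⟩
  induction h with
  | single h1 => exact step h1
  | tail _ h2 ih =>
      exact ⟨ih.1.trans (step h2).1, ih.2.trans (step h2).2⟩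

theorem aux_star_le {owner : A → P} {G : Set P} {V V' : Set A}
    {M M' : Set (Msg P A)} (h : reach owner G (V, M) (V', M'))
    (hT' : TState owner V' M') :
    starV owner G V M ⊆ V' ∧ starM G M ⊆ M' := by
  obtain ⟨h1, h2⟩ := aux_reach_lower h
  constructor
  · rintro p (hF | hp)
    · exact aux_facts_sub hT' (aux_facts_mono (aux_starM_subset G M') (aux_facts_mono h1 hF))
    · exact (h2 hp).1
  · exact fun m hm => (h1 hm).1

theorem aux_exists_list [Fintype P] {G : Set P} (hG : G.Nonempty) :
    ∃ l : List P, l ≠ [] ∧ {x | x ∈ l} = G := by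
  classical
  have hfin : G.Finite := Set.toFinite G
  refine ⟨hfin.toFinset.toList, ?_, ?_⟩
  · intro hnil
    rw [Finset.toList_eq_nil] at hnil
    obtain ⟨x, hx⟩ := hG
    have hmem : x ∈ hfin.toFinset := hfin.mem_toFinset.mpr hx
    rw [hnil] at hmem
    exact absurd hmem (Finset.notMem_empty x)
  · ext x
    simp only [Set.mem_setOf_eq, Finset.mem_toList, Set.Finite.mem_toFinset]

theorem aux_reach_star_list {owner : A → P} {G : Set P} :
    ∀ (l : List P) (V : Set A) (M : Set (Msg P A)), TState owner V M →
      l ≠ [] → (∀ x ∈ l, x ∈ G) →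
      reach owner G (V, M) (starV owner {x | x ∈ l} V M, starM {x | x ∈ l} M)
  | [], _, _, _, hne, _ => absurd rfl hne
  | [i], V, M, hT, _, hl => by
      have hset : {x | x ∈ [i]} = ({i} : Set P) := by ext x; simp
      rw [hset]
      exact Relation.TransGen.single ⟨i, hl i (by simp), aux_indist_star hT i⟩
  | i :: j :: l, V, M, hT, _, hl => by
      have h1 : reach owner G (V, M) (starV owner {i} V M, starM {i} M) :=
        Relation.TransGen.single ⟨i, hl i (by simp), aux_indist_star hT i⟩
      have h2 := aux_reach_star_list (j :: l) (starV owner {i} V M) (starM {i} M)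
        (aux_tstate_star hT {i}) (by simp) (fun x hx => hl x (List.mem_cons_of_mem i hx))
      rw [aux_starV_comp hT, aux_starM_comp] at h2
      have hset : {x | x ∈ j :: l} ∪ {i} = {x | x ∈ i :: j :: l} := by
        ext x
        simp only [Set.mem_union, Set.mem_setOf_eq, Set.mem_singleton_iff,
          List.mem_cons]
        tauto
      rw [hset] at h2
      exact h1.trans h2

theorem aux_sat_mono [Fintype P] {owner : A → P} :
    ∀ (φ : Form P A), Positive φ → ∀ (V : Set A) (M : Set (Msg P A))
      (V' : Set A) (M' : Set (Msg P A)), TState owner V M → TState owner V' M' →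
      V ⊆ V' → M ⊆ M' →
      sat owner (completeH P) φ V M → sat owner (completeH P) φ V' M' := by
  intro φ
  induction φ with
  | atom p => intro _ V M V' M' _ _ hV _ h; exact hV h
  | neg ψ ih => intro hpos; exact absurd hpos (by simp [Positive])
  | and ψ χ ihψ ihχ =>
      intro hpos V M V' M' hT hT' hV hM h
      exact ⟨ihψ hpos.1 V M V' M' hT hT' hV hM h.1,
        ihχ hpos.2 V M V' M' hT hT' hV hM h.2⟩
  | or ψ χ ihψ ihχ =>
      intro hpos V M V' M' hT hT' hV hM h
      rcases h with h | h
      · exact Or.inl (ihψ hpos.1 V M V' M' hT hT' hV hM h)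
      · exact Or.inr (ihχ hpos.2 V M V' M' hT hT' hV hM h)
  | ck G' ψ ih =>
      intro hpos V M V' M' hT hT' hV hM h
      intro V'' M'' hT'' hH'' hr
      rcases Set.eq_empty_or_nonempty G' with rfl | hne
      · exfalso
        cases hr with
        | single h1 => obtain ⟨i, hi, _⟩ := h1; exact Set.notMem_empty i hi
        | tail _ h2 => obtain ⟨i, hi, _⟩ := h2; exact Set.notMem_empty i hi
      · obtain ⟨l, hlne, hlG⟩ := aux_exists_list hne
        have hreach : reach owner G' (V, M)
            (starV owner G' V M, starM G' M) := by
          have := aux_reach_star_list l V M hT hlne (fun x hx => (Set.ext_iff.mp hlG x).mp hx)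
          rwa [hlG] at this
        have hstar : sat owner (completeH P) ψ (starV owner G' V M) (starM G' M) :=
          h _ _ (aux_tstate_star hT G') (aux_hcomp (aux_tstate_star hT G')) hreach
        obtain ⟨hle1, hle2⟩ := aux_star_le hr hT''
        exact ih hpos _ _ _ _ (aux_tstate_star hT G') hT''
          (Set.Subset.trans (aux_starV_mono hV hM G') hle1)
          (Set.Subset.trans (aux_starM_mono hM G') hle2) hstar

theorem aux_ck_iff_star [Fintype P] {owner : A → P} {V : Set A}
    {M : Set (Msg P A)} (hT : TState owner V M) {G : Set P} (hG : G.Nonempty)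
    {ψ : Form P A} (hψ : Positive ψ) :
    sat owner (completeH P) (.ck G ψ) V M ↔
      sat owner (completeH P) ψ (starV owner G V M) (starM G M) := by
  constructor
  · intro h
    obtain ⟨l, hlne, hlG⟩ := aux_exists_list hG
    have hreach : reach owner G (V, M) (starV owner G V M, starM G M) := by
      have := aux_reach_star_list l V M hT hlne (fun x hx => (Set.ext_iff.mp hlG x).mp hx)
      rwa [hlG] at this
    exact h _ _ (aux_tstate_star hT G) (aux_hcomp (aux_tstate_star hT G)) hreach
  · intro h V' M' hT' _ hr
    obtain ⟨h1, h2⟩ := aux_star_le hr hT'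
    exact aux_sat_mono ψ hψ _ _ _ _ (aux_tstate_star hT G) hT' h1 h2 h

theorem aux_positive_kw {φ : Form P A} (hφ : Positive φ) :
    ∀ w : List P, Positive (Kw w φ)
  | [] => hφ
  | _ :: w => aux_positive_kw hφ w

theorem aux_kw_iff [Fintype P] {owner : A → P} {φ : Form P A} (hφ : Positive φ) :
    ∀ (w : List P) (V : Set A) (M : Set (Msg P A)), TState owner V M → w ≠ [] →
      (sat owner (completeH P) (Kw w φ) V M ↔
        sat owner (completeH P) φ (starV owner {x | x ∈ w} V M)
          (starM {x | x ∈ w} M))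
  | [], _, _, _, hne => absurd rfl hne
  | [i], V, M, hT, _ => by
      have hset : {x | x ∈ [i]} = ({i} : Set P) := by ext x; simp
      have : Kw [i] φ = Form.ck {i} φ := rfl
      rw [this, hset]
      exact aux_ck_iff_star hT (Set.singleton_nonempty i) hφ
  | i :: j :: w, V, M, hT, _ => by
      have hKw : Kw (i :: j :: w) φ = Form.ck {i} (Kw (j :: w) φ) := rfl
      rw [hKw]
      have h1 := aux_ck_iff_star hT (Set.singleton_nonempty i)
        (aux_positive_kw hφ (j :: w))
      have h2 := aux_kw_iff hφ (j :: w) (starV owner {i} V M) (starM {i} M)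
        (aux_tstate_star hT {i}) (by simp)
      rw [aux_starV_comp hT, aux_starM_comp] at h2
      have hset : {x | x ∈ j :: w} ∪ {i} = {x | x ∈ i :: j :: w} := by
        ext x
        simp only [Set.mem_union, Set.mem_setOf_eq, Set.mem_singleton_iff,
          List.mem_cons]
        tauto
      rw [hset] at h2
      exact h1.trans h2

end AuxLemmas

theorem ck_iff_exhaustive_word {P A : Type} [Fintype P] (owner : A → P)
    (V : Set A) (M : Set (Msg P A)) (hS : TState owner V M)
    (G : Set P) (hG : G.Nonempty) (φ : Form P A) (hφ : Positive φ) :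
    sat owner (completeH P) (.ck G φ) V M ↔
      ∃ w : List P, {x | x ∈ w} = G ∧ sat owner (completeH P) (Kw w φ) V M := by
  have hmain := aux_ck_iff_star hS hG hφ
  constructor
  · intro h
    obtain ⟨l, hlne, hlG⟩ := aux_exists_list hG
    refine ⟨l, hlG, ?_⟩
    rw [aux_kw_iff hφ l V M hS hlne, hlG]
    exact hmain.mp h
  · rintro ⟨w, hwG, hw⟩
    have hwne : w ≠ [] := by
      rintro rfl
      have : {x | x ∈ ([] : List P)} = (∅ : Set P) := by ext x; simp
      rw [this] at hwG
      exact hG.ne_empty hwG.symm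
    rw [aux_kw_iff hφ w V M hS hwne, hwG] at hw
    exact hmain.mpr hw
end

section
/- Common knowledge without communication of negative facts: Let N = {i,j,k}, H = {{i,j,k}}, and p ∈ At_k. Then the empty state (∅,∅) satisfies (∅,∅) ⊨_H C_{{i,j,k}} ¬K_j p arising from the fact that the only hyperarc containing j also contains i; in particular (∅,∅) ⊨_H K_i ¬K_j p. -/
lemma msg_persist {P A : Type} (owner : A → P) (i j k : P)
    (hall : ∀ x : P, x = i ∨ x = j ∨ x = k)
    (G : Set P) (s t : Set A × Set (Msg P A))
    (h : reach owner G s t) :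
    ∀ m ∈ t.2, m.grp = ({i, j, k} : Set P) → m ∈ s.2 := by
  induction h with
  | single hst =>
      intro m hm hgrp
      obtain ⟨l, _, _, hM⟩ := hst
      have hl : l ∈ m.grp := by
        rw [hgrp]; rcases hall l with h | h | h <;> simp [h]
      have : m ∈ {m ∈ s.2 | l ∈ m.grp} := by rw [hM]; exact ⟨hm, hl⟩
      exact this.1
  | tail _ hst ih =>
      intro m hm hgrp
      obtain ⟨l, _, _, hM⟩ := hst
      have hl : l ∈ m.grp := by
        rw [hgrp]; rcases hall l with h | h | h <;> simp [h]
      have hmem := (Set.ext_iff.mp hM m).mpr ⟨hm, hl⟩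
      exact ih m hmem.1 hgrp

lemma not_kj {P A : Type} (owner : A → P) (i j k : P)
    (hij : i ≠ j) (hjk : j ≠ k)
    (hall : ∀ x : P, x = i ∨ x = j ∨ x = k)
    (p : A) (hp : owner p = k)
    (G : Set P) :
    sat owner {({i, j, k} : Set P)}
        (.ck G (.neg (.ck {j} (.atom p)))) ∅ ∅ := by
  intro V' M' hT hH hreach
  -- M' = ∅
  have hM' : M' = ∅ := by
    ext m
    simp only [Set.mem_empty_iff_false, iff_false]
    intro hm
    have hgrp : m.grp = ({i, j, k} : Set P) := hH m hm
    exact (msg_persist owner i j k hall G _ _ hreach m hm hgrp)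
  subst hM'
  intro hK
  have hind : indist owner j (V', (∅ : Set (Msg P A))) ({q ∈ V' | q ≠ p}, ∅) := by
    constructor
    · ext q
      simp only [Set.mem_setOf_eq]
      constructor
      · rintro ⟨hq, hoq⟩
        refine ⟨⟨hq, ?_⟩, hoq⟩
        rintro rfl
        exact hjk (hoq ▸ hp.symm ▸ rfl)
      · rintro ⟨⟨hq, _⟩, hoq⟩
        exact ⟨hq, hoq⟩
    · ext m; simp
  have := hK {q ∈ V' | q ≠ p} ∅
    (by intro m hm; exact absurd hm (Set.notMem_empty m))
    (by intro m hm; exact absurd hm (Set.notMem_empty m))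
    (Relation.TransGen.single ⟨j, rfl, hind⟩)
  exact this.2 rfl

theorem ck_without_communication {P A : Type} [Fintype P] (owner : A → P)
    (i j k : P) (hij : i ≠ j) (hik : i ≠ k) (hjk : j ≠ k)
    (hall : ∀ x : P, x = i ∨ x = j ∨ x = k)
    (p : A) (hp : owner p = k) :
    sat owner {({i, j, k} : Set P)}
        (.ck {i, j, k} (.neg (.ck {j} (.atom p)))) ∅ ∅ ∧
    sat owner {({i, j, k} : Set P)}
        (.ck {i} (.neg (.ck {j} (.atom p)))) ∅ ∅ := by
  exact ⟨not_kj owner i j k hij hjk hall p hp _, not_kj owner i j k hij hjk hall p hp _⟩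
end

section
/- Common knowledge of the hypergraph matters for negative formulas: With N = {i,j,k}, H = {{i,j,k}}, p ∈ At_k, the empty state satisfies (∅,∅) ⊨_H K_i ¬K_j p but (∅,∅) ⊭ K_i ¬K_j p, where ⊭ refers to semantics over the complete hypergraph (a witness is the state ({p}, {(k,{j,k},p)}), which is ∼_i-indistinguishable from (∅,∅) and satisfies K_j p). -/
lemma reach_single_indist {P A : Type} (owner : A → P) (i : P)
    {s t : Set A × Set (Msg P A)} (h : reach owner {i} s t) : indist owner i s t := by
  induction h with
  | single h =>
      obtain ⟨x, hx, hd⟩ := h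
      rw [Set.mem_singleton_iff] at hx; subst hx; exact hd
  | tail _ h ih =>
      obtain ⟨x, hx, hd⟩ := h
      rw [Set.mem_singleton_iff] at hx; subst hx
      exact ⟨ih.1.trans hd.1, ih.2.trans hd.2⟩

theorem ck_of_H_matters_for_negative {P A : Type} [Fintype P] (owner : A → P)
    (i j k : P) (hij : i ≠ j) (hik : i ≠ k) (hjk : j ≠ k)
    (hall : ∀ x : P, x = i ∨ x = j ∨ x = k)
    (p : A) (hp : owner p = k) :
    sat owner {({i, j, k} : Set P)}
        (.ck {i} (.neg (.ck {j} (.atom p)))) ∅ ∅ ∧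
    ¬ sat owner (completeH P)
        (.ck {i} (.neg (.ck {j} (.atom p)))) ∅ ∅ := by
  constructor
  · -- ⊨_H part
    intro V' M' hT hH hr hsat
    have hind := reach_single_indist owner i hr
    have hM' : M' = ∅ := by
      ext m
      simp only [Set.mem_empty_iff_false, iff_false]
      intro hm
      have hg := hH m hm
      simp only [Set.mem_singleton_iff] at hg
      have : m ∈ {m ∈ M' | i ∈ m.grp} := ⟨hm, by rw [hg]; simp⟩
      rw [← hind.2] at this
      simpa using this.1
    -- refute K_j p at (V', M')
    have := hsat {q ∈ V' | owner q = j} ∅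
      (fun m hm => absurd hm (Set.notMem_empty m))
      (fun m hm => absurd hm (Set.notMem_empty m))
      (Relation.TransGen.single ⟨j, rfl, by
        constructor
        · ext q; simp only [Set.mem_setOf_eq]; tauto
        · rw [hM']⟩)
    simp only [sat, Set.mem_setOf_eq] at this
    rw [hp] at this
    exact hjk this.2.symm
  · -- complete hypergraph part
    intro hsat
    have := hsat {p} {⟨k, {j, k}, p⟩}
      (by
        intro m hm
        simp only [Set.mem_singleton_iff] at hm
        subst hm
        exact ⟨by simp, hp, rfl⟩)
      (by
        intro m hm
        simp only [Set.mem_singleton_iff] at hm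
        subst hm
        exact ⟨j, by simp⟩)
      (Relation.TransGen.single ⟨i, rfl, by
        constructor
        · ext q
          simp only [Set.mem_setOf_eq, Set.mem_empty_iff_false, Set.mem_singleton_iff,
            false_and, false_iff, not_and]
          rintro rfl h
          rw [hp] at h; exact hik h.symm
        · ext m
          simp only [Set.mem_setOf_eq, Set.mem_empty_iff_false, Set.mem_singleton_iff,
            false_and, false_iff, not_and]
          rintro rfl h
          simp only [Set.mem_insert_iff, Set.mem_singleton_iff] at h
          rcases h with h | h
          · exact hij h
          · exact hik h⟩)
    simp only [sat] at this
    apply this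
    intro V'' M'' hT hH hr
    have hind := reach_single_indist owner j hr
    have hmsg : (⟨k, {j, k}, p⟩ : Msg P A) ∈ {m ∈ M'' | j ∈ m.grp} := by
      rw [← hind.2]
      exact ⟨rfl, by simp⟩
    exact (hT _ hmsg.1).2.2
end
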